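/- Let N(κ) = −κ + √(κ² + 4λ(r₀−κ)) for fixed λ, r₀ > 0 with λ < r₀, defined for κ ∈ (0, r₀). Then N''(κ) = 4λ(r₀−λ)/(κ² + 4λ(r₀−κ))^(3/2) > 0, so N is strictly convex in κ; moreover N'(κ) = (2κ−4λ)/(2√(κ²+4λ(r₀−κ))) − 1 ≤ 0, so N is nonincreasing. -/

import Mathlib

open Real

theorem nbp_numerator_convex_nonincreasing (lam r₀ : ℝ)
    (hlam : 0 < lam) (hr₀ : 0 < r₀) (hlamr : lam < r₀)
    (N : ℝ → ℝ)
    (hN : ∀ κ, N κ = -κ + Real.sqrt (κ ^ 2 + 4 * lam * (r₀ - κ))) :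
    (∀ κ ∈ Set.Ioo (0:ℝ) r₀,
        deriv (deriv N) κ = 4 * lam * (r₀ - lam) / (κ ^ 2 + 4 * lam * (r₀ - κ)) ^ ((3:ℝ)/2) ∧
        0 < deriv (deriv N) κ ∧
        deriv N κ = (2 * κ - 4 * lam) / (2 * Real.sqrt (κ ^ 2 + 4 * lam * (r₀ - κ))) - 1 ∧
        deriv N κ ≤ 0) ∧
    StrictConvexOn ℝ (Set.Ioo 0 r₀) N ∧
    AntitoneOn N (Set.Ioo 0 r₀) := by
  have hNfun : N = fun κ => -κ + Real.sqrt (κ ^ 2 + 4 * lam * (r₀ - κ)) := funext hN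
  have hQ : ∀ κ : ℝ, 0 < κ ^ 2 + 4 * lam * (r₀ - κ) := fun κ => by
    nlinarith [sq_nonneg (κ - 2 * lam)]
  have hs : ∀ κ : ℝ, 0 < Real.sqrt (κ ^ 2 + 4 * lam * (r₀ - κ)) :=
    fun κ => Real.sqrt_pos.2 (hQ κ)
  have hsq : ∀ κ : ℝ, (Real.sqrt (κ ^ 2 + 4 * lam * (r₀ - κ))) ^ 2 = κ ^ 2 + 4 * lam * (r₀ - κ) :=
    fun κ => Real.sq_sqrt (hQ κ).le
  have hQ' : ∀ κ : ℝ, HasDerivAt (fun κ => κ ^ 2 + 4 * lam * (r₀ - κ)) (2 * κ - 4 * lam) κ := by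
    intro κ
    have h1 := (hasDerivAt_pow 2 κ).add
      (((hasDerivAt_const κ r₀).sub (hasDerivAt_id κ)).const_mul (4 * lam))
    refine h1.congr_deriv (Eq.symm ?_)
    push_cast
    ring
  have hN' : ∀ κ : ℝ, HasDerivAt N
      ((2 * κ - 4 * lam) / (2 * Real.sqrt (κ ^ 2 + 4 * lam * (r₀ - κ))) - 1) κ := by
    intro κ
    rw [hNfun]
    have h2 := ((hasDerivAt_id κ).neg).add ((hQ' κ).sqrt (hQ κ).ne')
    refine h2.congr_deriv (Eq.symm ?_)
    ring
  have hderivN : deriv N = fun κ =>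
      (2 * κ - 4 * lam) / (2 * Real.sqrt (κ ^ 2 + 4 * lam * (r₀ - κ))) - 1 :=
    funext fun κ => (hN' κ).deriv
  have hrpow : ∀ κ : ℝ, (κ ^ 2 + 4 * lam * (r₀ - κ)) ^ ((3:ℝ)/2) =
      (κ ^ 2 + 4 * lam * (r₀ - κ)) * Real.sqrt (κ ^ 2 + 4 * lam * (r₀ - κ)) := by
    intro κ
    rw [show (3:ℝ)/2 = 1 + 1/2 by norm_num, Real.rpow_add (hQ κ), Real.rpow_one,
      ← Real.sqrt_eq_rpow]
  have hN'' : ∀ κ : ℝ, HasDerivAt (deriv N)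
      (4 * lam * (r₀ - lam) / (κ ^ 2 + 4 * lam * (r₀ - κ)) ^ ((3:ℝ)/2)) κ := by
    intro κ
    rw [hderivN]
    have hden : (2 : ℝ) * Real.sqrt (κ ^ 2 + 4 * lam * (r₀ - κ)) ≠ 0 :=
      (mul_pos two_pos (hs κ)).ne'
    have hnum : HasDerivAt (fun κ : ℝ => 2 * κ - 4 * lam) 2 κ := by
      simpa using ((hasDerivAt_id κ).const_mul 2).sub_const (4 * lam)
    have hd : HasDerivAt (fun κ => 2 * Real.sqrt (κ ^ 2 + 4 * lam * (r₀ - κ)))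
        (2 * ((2 * κ - 4 * lam) / (2 * Real.sqrt (κ ^ 2 + 4 * lam * (r₀ - κ))))) κ :=
      ((hQ' κ).sqrt (hQ κ).ne').const_mul 2
    have h3 := (hnum.div hd hden).sub_const 1
    refine h3.congr_deriv (Eq.symm ?_)
    rw [hrpow κ]
    set s := Real.sqrt (κ ^ 2 + 4 * lam * (r₀ - κ)) with hsdef
    have hs0 : 0 < s := hs κ
    have hs2 : s ^ 2 = κ ^ 2 + 4 * lam * (r₀ - κ) := hsq κ
    rw [← hs2]
    field_simp
    linear_combination (-4) * hs2
  constructor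
  · intro κ hκ
    refine ⟨(hN'' κ).deriv, ?_, (hN' κ).deriv, ?_⟩
    · rw [(hN'' κ).deriv]
      have h1 := hQ κ
      have h2 : 0 < r₀ - lam := by linarith
      positivity
    · rw [(hN' κ).deriv]
      have hs0 := hs κ
      have hs2 := hsq κ
      have h : (2 * κ - 4 * lam) / (2 * Real.sqrt (κ ^ 2 + 4 * lam * (r₀ - κ))) ≤ 1 := by
        rw [div_le_one (by positivity)]
        nlinarith [hs0, hs2]
      linarith
  · have hcont : ContinuousOn N (Set.Ioo 0 r₀) :=
      fun x _ => ((hN' x).differentiableAt.continuousAt).continuousWithinAt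
    have hderivneg : ∀ x ∈ interior (Set.Ioo (0:ℝ) r₀), deriv N x < 0 := by
      intro x _
      rw [(hN' x).deriv]
      have hs0 := hs x
      have hs2 := hsq x
      have h : (2 * x - 4 * lam) / (2 * Real.sqrt (x ^ 2 + 4 * lam * (r₀ - x))) < 1 := by
        rw [div_lt_one (by positivity)]
        nlinarith [hs0, hs2]
      linarith
    constructor
    · apply strictConvexOn_of_deriv2_pos (convex_Ioo 0 r₀) hcont
      intro x _
      have h := (hN'' x).deriv
      have hpos : 0 < deriv (deriv N) x := by
        rw [h]
        have h1 := hQ x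
        have h2 : 0 < r₀ - lam := by linarith
        positivity
      simpa [Function.iterate_succ, Function.comp] using hpos
    · exact (strictAntiOn_of_deriv_neg (convex_Ioo 0 r₀) hcont hderivneg).antitoneOn
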